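/- Let F be a field of characteristic not 2, and let c₁, c₂ ∈ F be nonzero with c₁ not a square in F. Let D be the quaternion algebra over F with basis 1, i, j, k satisfying i² = c₁, j² = c₂, ij = −ji = k, and let E = F + F·i ⊆ D, which is a quadratic field extension of F. For x = s + t·i ∈ E write x̄ = s − t·i and N(x) = x·x̄ = s² − c₁t². Then: (1) every invertible element of D of the form α + β·j with α, β ∈ E lies in E^×·1·E^× if β = 0, in E^×·j·E^× if α = 0, and in E^×·(1 + x·j)·E^× with x = α^{-1}β if both α, β are nonzero; (2) for α, β, α', β' ∈ E all nonzero, there exist t₁, t₂ ∈ E^× with t₁·(α + β·j)·t₂ = α' + β'·j if and only if N(α)·N(β') = N(α')·N(β). -/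

import Mathlib

open Quaternion

namespace DoubleCosetQuaternion

variable {F : Type*} [Field F]

/-- The basis element `i` of the quaternion algebra `ℍ[F, c₁, c₂]`. -/
def qi (F : Type*) [Field F] (c₁ c₂ : F) : ℍ[F, c₁, c₂] := ⟨0, 1, 0, 0⟩

/-- The basis element `j` of the quaternion algebra `ℍ[F, c₁, c₂]`. -/
def qj (F : Type*) [Field F] (c₁ c₂ : F) : ℍ[F, c₁, c₂] := ⟨0, 0, 1, 0⟩

/-- The embedding of `E = F + F·i` into `ℍ[F, c₁, c₂]`, where an element `s + t·i` of `E`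
is recorded as the pair `(s, t) ∈ F × F`. -/
def toD (F : Type*) [Field F] (c₁ c₂ : F) (x : F × F) : ℍ[F, c₁, c₂] := ⟨x.1, x.2, 0, 0⟩

/-- The norm `N(s + t·i) = (s + t·i)(s − t·i) = s² − c₁ t²` of an element of `E`. -/
def Nrm (c₁ : F) (x : F × F) : F := x.1 ^ 2 - c₁ * x.2 ^ 2

/-- Multiplication in `E = F[i]`, `i² = c₁`: `(s + t·i)(s' + t'·i) = (ss' + c₁tt') + (st' + ts')·i`. -/
def Emul (c₁ : F) (x y : F × F) : F × F := (x.1 * y.1 + c₁ * x.2 * y.2, x.1 * y.2 + x.2 * y.1)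

/-- Inversion in the field `E = F[i]`. -/
def Einv (c₁ : F) (x : F × F) : F × F := (x.1 / Nrm c₁ x, -x.2 / Nrm c₁ x)

def conjE (x : F × F) : F × F := (x.1, -x.2)

lemma Nrm_emul (c₁ : F) (x y : F × F) : Nrm c₁ (Emul c₁ x y) = Nrm c₁ x * Nrm c₁ y := by
  simp only [Nrm, Emul]; ring

lemma Nrm_conjE (c₁ : F) (x : F × F) : Nrm c₁ (conjE x) = Nrm c₁ x := by
  simp [Nrm, conjE]

lemma Nrm_ne_zero {c₁ : F} (hns : ∀ s : F, s ^ 2 ≠ c₁) {x : F × F} (hx : x ≠ 0) :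
    Nrm c₁ x ≠ 0 := by
  rcases eq_or_ne x.2 0 with h2 | h2
  · have h1 : x.1 ≠ 0 := fun h1 => hx (Prod.ext h1 h2)
    simp [Nrm, h2, pow_eq_zero_iff, h1]
  · intro h
    apply hns (x.1 / x.2)
    simp only [Nrm] at h
    field_simp
    linear_combination h

lemma ne_zero_of_nrm {c₁ : F} {x : F × F} (h : Nrm c₁ x ≠ 0) : x ≠ 0 := by
  rintro rfl; simp [Nrm] at h

lemma Emul_ne_zero {c₁ : F} (hns : ∀ s : F, s ^ 2 ≠ c₁) {x y : F × F}
    (hx : x ≠ 0) (hy : y ≠ 0) : Emul c₁ x y ≠ 0 := by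
  apply ne_zero_of_nrm
  rw [Nrm_emul]
  exact mul_ne_zero (Nrm_ne_zero hns hx) (Nrm_ne_zero hns hy)

lemma Emul_Einv_cancel {c₁ : F} (hns : ∀ s : F, s ^ 2 ≠ c₁) {x : F × F} (hx : x ≠ 0)
    (y : F × F) : Emul c₁ x (Emul c₁ (Einv c₁ x) y) = y := by
  have hN := Nrm_ne_zero hns hx
  have : x.1 ^ 2 - c₁ * x.2 ^ 2 ≠ 0 := hN
  ext <;> · simp only [Emul, Einv, Nrm] at *; field_simp; ring

lemma Einv_ne_zero {c₁ : F} (hns : ∀ s : F, s ^ 2 ≠ c₁) {x : F × F} (hx : x ≠ 0) :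
    Einv c₁ x ≠ 0 := by
  intro h
  have h2 := Emul_Einv_cancel hns hx ((1 : F), (0 : F))
  rw [h] at h2
  simp [Emul, Prod.ext_iff] at h2

lemma keyD (c₁ c₂ : F) (t₁ α β t₂ : F × F) :
    toD F c₁ c₂ t₁ * (toD F c₁ c₂ α + toD F c₁ c₂ β * qj F c₁ c₂) * toD F c₁ c₂ t₂ =
      toD F c₁ c₂ (Emul c₁ t₁ (Emul c₁ α t₂)) +
        toD F c₁ c₂ (Emul c₁ t₁ (Emul c₁ β (conjE t₂))) * qj F c₁ c₂ := by
  ext <;> simp [toD, qj, Emul, conjE] <;> ring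

lemma eqD (c₁ c₂ : F) (a b a' b' : F × F) :
    toD F c₁ c₂ a + toD F c₁ c₂ b * qj F c₁ c₂ =
      toD F c₁ c₂ a' + toD F c₁ c₂ b' * qj F c₁ c₂ ↔ a = a' ∧ b = b' := by
  constructor
  · intro h
    rw [QuaternionAlgebra.ext_iff] at h
    simp [toD, qj] at h
    exact ⟨Prod.ext h.1 h.2.1, Prod.ext h.2.2.1 h.2.2.2⟩
  · rintro ⟨rfl, rfl⟩; rfl

lemma hilbert90 {c₁ : F} {w : F × F} (hw : Nrm c₁ w = 1) :
    ∃ t : F × F, t ≠ 0 ∧ conjE t = Emul c₁ w t := by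
  rcases eq_or_ne w ((-1 : F), (0 : F)) with rfl | hne
  · exact ⟨(0, 1), by simp [Prod.ext_iff], by simp [conjE, Emul]⟩
  · refine ⟨(1 + w.1, -w.2), ?_, ?_⟩
    · intro h
      rw [Prod.ext_iff] at h
      simp only [Prod.fst_zero, Prod.snd_zero, neg_eq_zero] at h
      apply hne
      have h1 : w.1 = -1 := by linear_combination h.1
      exact Prod.ext (by simpa using h1) (by simpa using h.2)
    · have hw' : w.1 ^ 2 - c₁ * w.2 ^ 2 = 1 := hw
      refine Prod.ext ?_ ?_ <;> simp only [conjE, Emul]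
      · linear_combination (-1 : F) * hw'
      · ring

lemma Emul_comm (c₁ : F) (x y : F × F) : Emul c₁ x y = Emul c₁ y x := by
  refine Prod.ext ?_ ?_ <;> simp only [Emul] <;> ring

lemma Emul_assoc (c₁ : F) (x y z : F × F) :
    Emul c₁ (Emul c₁ x y) z = Emul c₁ x (Emul c₁ y z) := by
  refine Prod.ext ?_ ?_ <;> simp only [Emul] <;> ring

lemma Emul_left_comm (c₁ : F) (x y z : F × F) :
    Emul c₁ x (Emul c₁ y z) = Emul c₁ y (Emul c₁ x z) := by
  rw [← Emul_assoc, Emul_comm c₁ x y, Emul_assoc]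

lemma Emul_one (c₁ : F) (x : F × F) : Emul c₁ x ((1 : F), (0 : F)) = x := by
  refine Prod.ext ?_ ?_ <;> simp [Emul]

lemma Einv_Emul_cancel {c₁ : F} (hns : ∀ s : F, s ^ 2 ≠ c₁) {x : F × F} (hx : x ≠ 0)
    (y : F × F) : Emul c₁ (Einv c₁ x) (Emul c₁ x y) = y := by
  have hN : x.1 ^ 2 - c₁ * x.2 ^ 2 ≠ 0 := Nrm_ne_zero hns hx
  refine Prod.ext ?_ ?_ <;> simp only [Emul, Einv, Nrm] <;> field_simp <;> ring

lemma Einv_mul {c₁ : F} (hns : ∀ s : F, s ^ 2 ≠ c₁) {x : F × F} (hx : x ≠ 0) :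
    Emul c₁ (Einv c₁ x) x = ((1 : F), (0 : F)) := by
  have h := Einv_Emul_cancel hns hx ((1 : F), (0 : F))
  rwa [Emul_one] at h

lemma Nrm_Einv {c₁ : F} {x : F × F} (hN : Nrm c₁ x ≠ 0) :
    Nrm c₁ (Einv c₁ x) = (Nrm c₁ x)⁻¹ := by
  have h : x.1 ^ 2 - c₁ * x.2 ^ 2 ≠ 0 := hN
  simp only [Nrm, Einv] at *
  field_simp

lemma toD_zero (c₁ c₂ : F) : toD F c₁ c₂ 0 = 0 := rfl

/-- Parametrization of the double cosets `E^× \ D^× / E^×` for a quaternion algebra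
`D = ℍ[F, c₁, c₂]` and the quadratic subfield `E = F + F·i` (with `c₁` not a square, so that
`E` is a field): (1) an invertible element `α + β·j` (`α, β ∈ E`) lies in `E^×·1·E^×` if
`β = 0`, in `E^×·j·E^×` if `α = 0`, and in `E^×·(1 + α⁻¹β·j)·E^×` if both are nonzero;
(2) for `α, β, α', β'` all nonzero, `α + β·j` and `α' + β'·j` lie in the same double coset
iff `N(α)N(β') = N(α')N(β)`. -/
theorem double_coset_parametrization
    (h2 : (2 : F) ≠ 0) (c₁ c₂ : F) (hc₁ : c₁ ≠ 0) (hc₂ : c₂ ≠ 0)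
    (hns : ∀ s : F, s ^ 2 ≠ c₁) :
    (∀ α β : F × F, IsUnit (toD F c₁ c₂ α + toD F c₁ c₂ β * qj F c₁ c₂) →
      (β = 0 → ∃ t₁ t₂ : F × F, t₁ ≠ 0 ∧ t₂ ≠ 0 ∧
        toD F c₁ c₂ α + toD F c₁ c₂ β * qj F c₁ c₂ =
          toD F c₁ c₂ t₁ * 1 * toD F c₁ c₂ t₂) ∧
      (α = 0 → ∃ t₁ t₂ : F × F, t₁ ≠ 0 ∧ t₂ ≠ 0 ∧
        toD F c₁ c₂ α + toD F c₁ c₂ β * qj F c₁ c₂ =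
          toD F c₁ c₂ t₁ * qj F c₁ c₂ * toD F c₁ c₂ t₂) ∧
      (α ≠ 0 → β ≠ 0 → ∃ t₁ t₂ : F × F, t₁ ≠ 0 ∧ t₂ ≠ 0 ∧
        toD F c₁ c₂ α + toD F c₁ c₂ β * qj F c₁ c₂ =
          toD F c₁ c₂ t₁ * (1 + toD F c₁ c₂ (Emul c₁ (Einv c₁ α) β) * qj F c₁ c₂) *
            toD F c₁ c₂ t₂)) ∧
    (∀ α β α' β' : F × F, α ≠ 0 → β ≠ 0 → α' ≠ 0 → β' ≠ 0 →
      ((∃ t₁ t₂ : F × F, t₁ ≠ 0 ∧ t₂ ≠ 0 ∧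
        toD F c₁ c₂ t₁ * (toD F c₁ c₂ α + toD F c₁ c₂ β * qj F c₁ c₂) * toD F c₁ c₂ t₂ =
          toD F c₁ c₂ α' + toD F c₁ c₂ β' * qj F c₁ c₂) ↔
        Nrm c₁ α * Nrm c₁ β' = Nrm c₁ α' * Nrm c₁ β)) := by

  constructor
  · intro α β hu
    refine ⟨?_, ?_, ?_⟩
    · rintro rfl
      have hα : α ≠ 0 := by
        rintro rfl
        rw [toD_zero] at hu
        simp at hu
      refine ⟨α, (1, 0), hα, by simp [Prod.ext_iff], ?_⟩
      ext <;> simp [toD, qj] <;> ring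
    · rintro rfl
      have hβ : β ≠ 0 := by
        rintro rfl
        rw [toD_zero] at hu
        simp at hu
      refine ⟨β, (1, 0), hβ, by simp [Prod.ext_iff], ?_⟩
      ext <;> simp [toD, qj] <;> ring
    · intro hα hβ
      have hNα : α.1 ^ 2 - c₁ * α.2 ^ 2 ≠ 0 := Nrm_ne_zero hns hα
      refine ⟨α, (1, 0), hα, by simp [Prod.ext_iff], ?_⟩
      ext <;> simp [toD, qj, Emul, Einv, Nrm] <;> field_simp <;> ring
  · intro α β α' β' hα hβ hα' hβ'
    have hNα : α.1 ^ 2 - c₁ * α.2 ^ 2 ≠ 0 := Nrm_ne_zero hns hα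
    have hNβ : β.1 ^ 2 - c₁ * β.2 ^ 2 ≠ 0 := Nrm_ne_zero hns hβ
    have hNα' : α'.1 ^ 2 - c₁ * α'.2 ^ 2 ≠ 0 := Nrm_ne_zero hns hα'
    have hNβ' : β'.1 ^ 2 - c₁ * β'.2 ^ 2 ≠ 0 := Nrm_ne_zero hns hβ'
    constructor
    · rintro ⟨t₁, t₂, ht₁, ht₂, heq⟩
      rw [keyD, eqD] at heq
      obtain ⟨h1, h2⟩ := heq
      rw [← h1, ← h2]
      simp only [Nrm_emul, Nrm_conjE]
      ring
    · intro hN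
      have hNw : Nrm c₁ (Emul c₁ (Einv c₁ β) (Emul c₁ α (Emul c₁ (Einv c₁ α') β'))) = 1 := by
        have hb : Nrm c₁ β ≠ 0 := Nrm_ne_zero hns hβ
        have ha' : Nrm c₁ α' ≠ 0 := Nrm_ne_zero hns hα'
        rw [Nrm_emul, Nrm_emul, Nrm_emul, Nrm_Einv hb, Nrm_Einv ha']
        field_simp
        linear_combination hN
      obtain ⟨t, ht0, ht⟩ := hilbert90 hNw
      have hNt : t.1 ^ 2 - c₁ * t.2 ^ 2 ≠ 0 := Nrm_ne_zero hns ht0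
      refine ⟨Emul c₁ α' (Emul c₁ (Einv c₁ t) (Einv c₁ α)), t,
        Emul_ne_zero hns hα' (Emul_ne_zero hns (Einv_ne_zero hns ht0) (Einv_ne_zero hns hα)),
        ht0, ?_⟩
      rw [keyD, eqD]
      constructor
      · rw [Emul_assoc c₁ α' (Emul c₁ (Einv c₁ t) (Einv c₁ α)) (Emul c₁ α t),
          Emul_assoc c₁ (Einv c₁ t) (Einv c₁ α) (Emul c₁ α t),
          Einv_Emul_cancel hns hα t, Einv_mul hns ht0, Emul_one]
      · rw [ht,
          Emul_assoc c₁ (Einv c₁ β) (Emul c₁ α (Emul c₁ (Einv c₁ α') β')) t,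
          Emul_Einv_cancel hns hβ,
          Emul_assoc c₁ α (Emul c₁ (Einv c₁ α') β') t,
          Emul_assoc c₁ (Einv c₁ α') β' t,
          Emul_assoc c₁ α' (Emul c₁ (Einv c₁ t) (Einv c₁ α))
            (Emul c₁ α (Emul c₁ (Einv c₁ α') (Emul c₁ β' t))),
          Emul_assoc c₁ (Einv c₁ t) (Einv c₁ α)
            (Emul c₁ α (Emul c₁ (Einv c₁ α') (Emul c₁ β' t))),
          Einv_Emul_cancel hns hα,
          Emul_left_comm c₁ (Einv c₁ t) (Einv c₁ α') (Emul c₁ β' t),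
          Emul_Einv_cancel hns hα',
          Emul_comm c₁ β' t,
          Einv_Emul_cancel hns ht0]


end DoubleCosetQuaternion
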